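/- Let K be a finite undirected chordal graph on at least 2 vertices with no dominating vertex. Then the complement graph K^c is connected. -/

import Mathlib

/-- A chord of a closed walk: an edge of `G` between two vertices of the walk
that is not an edge of the walk. -/
def SimpleGraph.Walk.HasChord {V : Type*} {G : SimpleGraph V} {v : V}
    (c : G.Walk v v) : Prop :=
  ∃ a b, a ∈ c.support ∧ b ∈ c.support ∧ G.Adj a b ∧ s(a, b) ∉ c.edges

/-- A graph is chordal if every cycle with four or more vertices has a chord. -/
def SimpleGraph.IsChordalGraph {V : Type*} (G : SimpleGraph V) : Prop :=
  ∀ (v : V) (c : G.Walk v v), c.IsCycle → 4 ≤ c.length → c.HasChord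

/-- A vertex is dominating if it is adjacent to every other vertex. -/
def SimpleGraph.IsDominatingVertex {V : Type*} (G : SimpleGraph V) (v : V) : Prop :=
  ∀ w, w ≠ v → G.Adj v w

/-- `D` is an orientation of `G`: each edge gets exactly one direction. -/
def SimpleGraph.IsOrientation {V : Type*} (G : SimpleGraph V) (D : V → V → Prop) : Prop :=
  (∀ a b, G.Adj a b ↔ (D a b ∨ D b a)) ∧ ∀ a b, ¬(D a b ∧ D b a)

/-- An orientation (directed relation) is acyclic if it has no directed cycle. -/
def IsAcyclicRel {V : Type*} (D : V → V → Prop) : Prop :=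
  ∀ a, ¬ Relation.TransGen D a a

/-- An orientation is moral (w.r.t. `G`) if it contains no v-structure. -/
def SimpleGraph.IsMoralOrient {V : Type*} (G : SimpleGraph V) (D : V → V → Prop) : Prop :=
  ∀ a b c, D a c → D b c → a ≠ b → G.Adj a b

/-- The number of moral acyclic orientations of `G`. -/
noncomputable def moralAcyclicCount {V : Type*} (G : SimpleGraph V) : ℕ :=
  Set.ncard {D : V → V → Prop |
    G.IsOrientation D ∧ IsAcyclicRel D ∧ G.IsMoralOrient D}

/-- Join of two graphs: all edges of each plus all edges across. -/
def joinGraph {V1 V2 : Type*} (G1 : SimpleGraph V1) (G2 : SimpleGraph V2) :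
    SimpleGraph (V1 ⊕ V2) where
  Adj x y := match x, y with
    | .inl a, .inl b => G1.Adj a b
    | .inr a, .inr b => G2.Adj a b
    | .inl _, .inr _ => True
    | .inr _, .inl _ => True
  symm := ⟨by rintro (a | a) (b | b) h <;> simp_all [SimpleGraph.adj_comm]⟩
  loopless := ⟨by rintro (a | a) h <;> simp_all⟩

/-- Disjoint union of two graphs. -/
def sumGraph {V1 V2 : Type*} (G1 : SimpleGraph V1) (G2 : SimpleGraph V2) :
    SimpleGraph (V1 ⊕ V2) where
  Adj x y := match x, y with
    | .inl a, .inl b => G1.Adj a b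
    | .inr a, .inr b => G2.Adj a b
    | _, _ => False
  symm := ⟨by rintro (a | a) (b | b) h <;> simp_all [SimpleGraph.adj_comm]⟩
  loopless := ⟨by rintro (a | a) h <;> simp_all⟩

theorem complement_connected {V : Type*} [Fintype V] (K : SimpleGraph V)
    (hcard : 2 ≤ Fintype.card V)
    (hchord : K.IsChordalGraph)
    (hdom : ∀ v : V, ¬ K.IsDominatingVertex v) :
    Kᶜ.Connected := by
  have hne : Nonempty V := Fintype.card_pos_iff.mp (by omega)
  rw [SimpleGraph.connected_iff]
  refine ⟨?_, hne⟩
  by_contra hpc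
  simp only [SimpleGraph.Preconnected, not_forall] at hpc
  obtain ⟨u, v, hnr⟩ := hpc
  -- cross edges: reachable-to-unreachable pairs are adjacent in K
  have cross : ∀ a b, Kᶜ.Reachable u a → ¬ Kᶜ.Reachable u b → K.Adj a b := by
    intro a b hra hrb
    by_contra hK
    have hab : a ≠ b := by rintro rfl; exact hrb hra
    have : Kᶜ.Adj a b := by rw [SimpleGraph.compl_adj]; exact ⟨hab, hK⟩
    exact hrb (hra.trans this.reachable)
  obtain ⟨a', ha'u, ha'⟩ : ∃ a', a' ≠ u ∧ ¬ K.Adj u a' := by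
    have := hdom u
    simp only [SimpleGraph.IsDominatingVertex, not_forall] at this
    obtain ⟨w, hw, hw2⟩ := this
    exact ⟨w, hw, hw2⟩
  obtain ⟨b', hb'v, hb'⟩ : ∃ b', b' ≠ v ∧ ¬ K.Adj v b' := by
    have := hdom v
    simp only [SimpleGraph.IsDominatingVertex, not_forall] at this
    obtain ⟨w, hw, hw2⟩ := this
    exact ⟨w, hw, hw2⟩
  have hra' : Kᶜ.Reachable u a' := by
    exact (SimpleGraph.Adj.reachable (by rw [SimpleGraph.compl_adj]; exact ⟨ha'u.symm.symm.symm, ha'⟩))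
  have hrb' : ¬ Kᶜ.Reachable u b' := by
    intro h
    have : Kᶜ.Adj v b' := by rw [SimpleGraph.compl_adj]; exact ⟨hb'v.symm, hb'⟩
    exact hnr (h.trans this.symm.reachable)
  -- adjacency facts
  have h1 : K.Adj u v := cross u v (SimpleGraph.Reachable.refl u) hnr
  have h2 : K.Adj v a' := (cross a' v hra' hnr).symm
  have h3 : K.Adj a' b' := cross a' b' hra' hrb'
  have h4 : K.Adj b' u := (cross u b' (SimpleGraph.Reachable.refl u) hrb').symm
  -- distinctness
  have duv : u ≠ v := fun h => hnr (h ▸ SimpleGraph.Reachable.refl u)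
  have dub : u ≠ b' := fun h => hrb' (h ▸ SimpleGraph.Reachable.refl u)
  have dva : v ≠ a' := fun h => hnr (h ▸ hra')
  have dab : a' ≠ b' := fun h => hrb' (h ▸ hra')
  set c : K.Walk u u :=
    SimpleGraph.Walk.cons h1 (SimpleGraph.Walk.cons h2
      (SimpleGraph.Walk.cons h3 (SimpleGraph.Walk.cons h4 SimpleGraph.Walk.nil)))
    with hc
  have hcyc : c.IsCycle := by
    rw [SimpleGraph.Walk.isCycle_def, SimpleGraph.Walk.isTrail_def]
    refine ⟨?_, by simp [hc], ?_⟩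
    · simp only [hc, SimpleGraph.Walk.edges_cons, SimpleGraph.Walk.edges_nil,
        List.nodup_cons, List.mem_cons, List.not_mem_nil, List.nodup_nil,
        Sym2.eq_iff, or_false, and_true, not_or]
      simp only [ne_eq] at *
      tauto
    · simp only [hc, SimpleGraph.Walk.support_cons, SimpleGraph.Walk.support_nil,
        List.tail_cons, List.nodup_cons, List.mem_cons, List.not_mem_nil,
        List.nodup_nil, or_false, and_true, not_or]
      simp only [ne_eq] at *
      tauto
  obtain ⟨a, b, ha, hb, hadj, hch⟩ := hchord u c hcyc (by simp [hc])
  simp only [hc, SimpleGraph.Walk.support_cons, SimpleGraph.Walk.support_nil,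
    List.mem_cons, List.mem_singleton, List.not_mem_nil, or_false] at ha hb
  simp only [hc, SimpleGraph.Walk.edges_cons, SimpleGraph.Walk.edges_nil,
    List.mem_cons, List.not_mem_nil, or_false, not_or] at hch
  obtain ⟨e1, e2, e3, e4⟩ := hch
  rw [Sym2.eq_iff] at e1 e2 e3 e4
  rcases ha with rfl | rfl | rfl | rfl | rfl <;>
    rcases hb with rfl | rfl | rfl | rfl | rfl <;>
      first
        | exact hadj.ne rfl
        | exact ha' hadj | exact ha' hadj.symm
        | exact hb' hadj | exact hb' hadj.symm
        | exact e1 (Or.inl ⟨rfl, rfl⟩) | exact e1 (Or.inr ⟨rfl, rfl⟩)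
        | exact e2 (Or.inl ⟨rfl, rfl⟩) | exact e2 (Or.inr ⟨rfl, rfl⟩)
        | exact e3 (Or.inl ⟨rfl, rfl⟩) | exact e3 (Or.inr ⟨rfl, rfl⟩)
        | exact e4 (Or.inl ⟨rfl, rfl⟩) | exact e4 (Or.inr ⟨rfl, rfl⟩)
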